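/- Let A, B, C be three independent standard Brownian motions on a common probability space, let α, β ∈ [−1, 1], and define the correlated Brownian motions U_t = α A_t + √(1−α²) B_t and W_t = β A_t + √(1−β²) C_t, with correlation ρ = αβ. Let X̄₁, X̄₂ > 0, σ₁, σ₂ > 0, λ₁ > σ₁²/2, λ₂ > σ₂²/2, and define u(t) = ( λ₁ X̄₁ ∫₀^t e^{−(λ₁ + σ₁²/2) x} e^{σ₁ U_x} dx ) · ( λ₂ X̄₂ ∫₀^t e^{−(λ₂ + σ₂²/2) y} e^{σ₂ W_y} dy ). Then lim_{t→∞} E[u(t)] = X̄₁ X̄₂ (λ₁ + λ₂) / ( λ₁ + λ₂ − ρ σ₁ σ₂ ). In particular, when ρ ≠ 0 the limiting mean differs from the uncorrelated value X̄₁ X̄₂: positive correlation increases it and negative correlation decreases it. -/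

import Mathlib

open MeasureTheory ProbabilityTheory Filter Real

/-- `W` is a standard Brownian motion on the probability space `Ω`: each `W t` is
measurable, `W 0 = 0` almost surely, `W` has independent increments, the increment
`W t − W s` (for `0 ≤ s ≤ t`) is Gaussian with mean `0` and variance `t − s`, and the
sample paths are almost surely continuous. -/
def IsStdBrownianMotion {Ω : Type*} [MeasureSpace Ω] (W : ℝ → Ω → ℝ) : Prop :=
  (∀ t, Measurable (W t)) ∧
  (∀ᵐ ω, W 0 ω = 0) ∧
  (∀ (n : ℕ) (t : Fin (n + 1) → ℝ), Monotone t →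
      iIndepFun
        (fun i : Fin n => fun ω => W (t i.succ) ω - W (t i.castSucc) ω) ℙ) ∧
  (∀ s t : ℝ, 0 ≤ s → s ≤ t →
      Measure.map (fun ω => W t ω - W s ω) ℙ = gaussianReal 0 (Real.toNNReal (t - s))) ∧
  (∀ᵐ ω, Continuous fun t => W t ω)

section Helpers
open Set
open scoped NNReal ENNReal

lemma my_lintegral_exp_gaussian (v : ℝ≥0) (a : ℝ) :
    ∫⁻ z, ENNReal.ofReal (Real.exp (a * z)) ∂(gaussianReal 0 v)
      = ENNReal.ofReal (Real.exp (a ^ 2 * v / 2)) := by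
  have hmeas : Measurable fun z : ℝ => ENNReal.ofReal (Real.exp (a * z)) :=
    (measurable_const.mul measurable_id').exp.ennreal_ofReal
  by_cases hv : v = 0
  · subst hv
    rw [gaussianReal_zero_var, lintegral_dirac' _ hmeas]
    norm_num
  · rw [gaussianReal_of_var_ne_zero _ hv,
      lintegral_withDensity_eq_lintegral_mul _ (measurable_gaussianPDF _ _) hmeas]
    have key : ∀ z : ℝ, gaussianPDFReal 0 v z * Real.exp (a * z)
        = Real.exp (a ^ 2 * v / 2) * gaussianPDFReal (a * v) v z := by
      intro z
      have hvpos : (0:ℝ) < (v:ℝ) := by positivity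
      have hexp : rexp (-(z - 0) ^ 2 / (2 * (v:ℝ)) + a * z)
          = rexp (a ^ 2 * (v:ℝ) / 2 + -(z - a * (v:ℝ)) ^ 2 / (2 * (v:ℝ))) := by
        congr 1
        field_simp
        ring
      simp only [gaussianPDFReal]
      rw [mul_assoc, ← Real.exp_add, hexp, Real.exp_add]
      ring
    have : ∀ z : ℝ, (gaussianPDF 0 v * fun z => ENNReal.ofReal (rexp (a * z))) z
        = ENNReal.ofReal (Real.exp (a ^ 2 * v / 2)) * ENNReal.ofReal (gaussianPDFReal (a * v) v z) := by
      intro z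
      simp only [Pi.mul_apply, gaussianPDF]
      rw [← ENNReal.ofReal_mul (gaussianPDFReal_nonneg _ _ _), key z,
        ENNReal.ofReal_mul (Real.exp_nonneg _)]
    simp_rw [this]
    rw [lintegral_const_mul _ (measurable_gaussianPDFReal _ _).ennreal_ofReal]
    have := lintegral_gaussianPDFReal_eq_one (a * v) hv
    rw [this, mul_one]

lemma bm_inc_exp {Ω : Type*} [MeasureSpace Ω] {A : ℝ → Ω → ℝ}
    (hA : IsStdBrownianMotion A) {s t : ℝ} (hs : 0 ≤ s) (hst : s ≤ t) (c : ℝ) :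
    ∫⁻ ω, ENNReal.ofReal (Real.exp (c * (A t ω - A s ω))) ∂ℙ
      = ENNReal.ofReal (Real.exp (c ^ 2 * (t - s) / 2)) := by
  have hfm : Measurable fun z : ℝ => ENNReal.ofReal (Real.exp (c * z)) :=
    (measurable_const.mul measurable_id').exp.ennreal_ofReal
  have hmeas : Measurable fun ω => A t ω - A s ω := (hA.1 t).sub (hA.1 s)
  have hmap := lintegral_map (μ := (ℙ : Measure Ω)) hfm hmeas
  rw [← hmap, hA.2.2.2.1 s t hs hst, my_lintegral_exp_gaussian]
  rw [Real.coe_toNNReal _ (by linarith)]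

lemma bm_exp_single {Ω : Type*} [MeasureSpace Ω] {A : ℝ → Ω → ℝ}
    (hA : IsStdBrownianMotion A) {x : ℝ} (hx : 0 ≤ x) (a : ℝ) :
    ∫⁻ ω, ENNReal.ofReal (Real.exp (a * A x ω)) ∂ℙ
      = ENNReal.ofReal (Real.exp (a ^ 2 * x / 2)) := by
  have hcongr : ∀ᵐ ω, ENNReal.ofReal (Real.exp (a * A x ω))
      = ENNReal.ofReal (Real.exp (a * (A x ω - A 0 ω))) := by
    filter_upwards [hA.2.1] with ω h
    rw [h, sub_zero]
  rw [lintegral_congr_ae hcongr, bm_inc_exp hA le_rfl hx, sub_zero]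

lemma bm_exp_pair {Ω : Type*} [MeasureSpace Ω] [IsProbabilityMeasure (ℙ : Measure Ω)]
    {A : ℝ → Ω → ℝ}
    (hA : IsStdBrownianMotion A) {x y : ℝ} (hx : 0 ≤ x) (hxy : x ≤ y) (a b : ℝ) :
    ∫⁻ ω, ENNReal.ofReal (Real.exp (a * A x ω + b * A y ω)) ∂ℙ
      = ENNReal.ofReal (Real.exp ((a ^ 2 * x + b ^ 2 * y + 2 * a * b * x) / 2)) := by
  obtain ⟨hmeas, h0, hinc, hlaw, hcont⟩ := hA
  set I0 : Ω → ℝ := fun ω => A x ω - A 0 ω with hI0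
  set I1 : Ω → ℝ := fun ω => A y ω - A x ω with hI1
  have hmono : Monotone (![0, x, y] : Fin 3 → ℝ) := by
    rw [Fin.monotone_iff_le_succ]
    intro i
    fin_cases i <;> simp [hx, hxy]
  have hfam := hinc 2 ![0, x, y] hmono
  have hind : IndepFun I0 I1 ℙ := by
    have h01 := hfam.indepFun (show (0 : Fin 2) ≠ 1 by decide)
    convert h01 using 2 <;> rfl
  have hφ : Measurable fun z : ℝ => ENNReal.ofReal (Real.exp ((a + b) * z)) :=
    (measurable_const.mul measurable_id').exp.ennreal_ofReal
  have hψ : Measurable fun z : ℝ => ENNReal.ofReal (Real.exp (b * z)) :=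
    (measurable_const.mul measurable_id').exp.ennreal_ofReal
  have hI0m : Measurable I0 := (hmeas x).sub (hmeas 0)
  have hI1m : Measurable I1 := (hmeas y).sub (hmeas x)
  have hcongr : ∀ᵐ ω, ENNReal.ofReal (Real.exp (a * A x ω + b * A y ω))
      = ENNReal.ofReal (Real.exp ((a + b) * I0 ω)) * ENNReal.ofReal (Real.exp (b * I1 ω)) := by
    filter_upwards [h0] with ω hω
    rw [← ENNReal.ofReal_mul (Real.exp_nonneg _), ← Real.exp_add]
    congr 2
    simp only [hI0, hI1, hω]
    ring
  have hA' : IsStdBrownianMotion A := ⟨hmeas, h0, hinc, hlaw, hcont⟩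
  calc ∫⁻ ω, ENNReal.ofReal (Real.exp (a * A x ω + b * A y ω)) ∂ℙ
      = ∫⁻ ω, ENNReal.ofReal (Real.exp ((a + b) * I0 ω))
          * ENNReal.ofReal (Real.exp (b * I1 ω)) ∂ℙ := lintegral_congr_ae hcongr
    _ = (∫⁻ ω, ENNReal.ofReal (Real.exp ((a + b) * I0 ω)) ∂ℙ)
          * ∫⁻ ω, ENNReal.ofReal (Real.exp (b * I1 ω)) ∂ℙ :=
        lintegral_mul_eq_lintegral_mul_lintegral_of_indepFun'' (hφ.comp hI0m).aemeasurable
          (hψ.comp hI1m).aemeasurable (hind.comp hφ hψ)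
    _ = (∫⁻ ω, ENNReal.ofReal (Real.exp ((a + b) * (A x ω - A 0 ω))) ∂ℙ)
          * ∫⁻ ω, ENNReal.ofReal (Real.exp (b * (A y ω - A x ω))) ∂ℙ := rfl
    _ = ENNReal.ofReal (Real.exp ((a + b) ^ 2 * (x - 0) / 2))
          * ENNReal.ofReal (Real.exp (b ^ 2 * (y - x) / 2)) := by
        rw [bm_inc_exp hA' le_rfl hx, bm_inc_exp hA' hx hxy]
    _ = ENNReal.ofReal (Real.exp ((a ^ 2 * x + b ^ 2 * y + 2 * a * b * x) / 2)) := by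
        rw [← ENNReal.ofReal_mul (Real.exp_nonneg _), ← Real.exp_add]
        congr 2
        ring

lemma joint_mgf {Ω : Type*} [MeasureSpace Ω] [IsProbabilityMeasure (ℙ : Measure Ω)]
    (A B C : ℝ → Ω → ℝ)
    (hA : IsStdBrownianMotion A) (hB : IsStdBrownianMotion B) (hC : IsStdBrownianMotion C)
    (hindep : iIndepFun
      (fun i : Fin 3 => fun ω => fun t : ℝ => (![A, B, C] i) t ω) ℙ)
    (α β σ₁ σ₂ : ℝ) (hα2 : α ^ 2 ≤ 1) (hβ2 : β ^ 2 ≤ 1)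
    {x y : ℝ} (hx : 0 ≤ x) (hy : 0 ≤ y) :
    ∫⁻ ω, ENNReal.ofReal (Real.exp
        (σ₁ * (α * A x ω + Real.sqrt (1 - α ^ 2) * B x ω)
          + σ₂ * (β * A y ω + Real.sqrt (1 - β ^ 2) * C y ω))) ∂ℙ
      = ENNReal.ofReal (Real.exp
          (σ₁ ^ 2 * x / 2 + σ₂ ^ 2 * y / 2 + α * β * σ₁ * σ₂ * min x y)) := by
  set f : Fin 3 → Ω → (ℝ → ℝ) := fun i ω => fun t : ℝ => (![A, B, C] i) t ω with hf
  have hfmeas : ∀ i, Measurable (f i) := by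
    intro i
    fin_cases i <;>
      · apply measurable_pi_lambda
        intro t
        first
          | exact hA.1 t
          | exact hB.1 t
          | exact hC.1 t
  set sa := Real.sqrt (1 - α ^ 2) with hsa
  set sb := Real.sqrt (1 - β ^ 2) with hsb
  set Φ : (ℝ → ℝ) → ℝ≥0∞ := fun p => ENNReal.ofReal (Real.exp (σ₁ * α * p x + σ₂ * β * p y))
    with hΦdef
  set Ψ : (ℝ → ℝ) → ℝ≥0∞ := fun p => ENNReal.ofReal (Real.exp (σ₁ * sa * p x)) with hΨdef
  set Χ : (ℝ → ℝ) → ℝ≥0∞ := fun p => ENNReal.ofReal (Real.exp (σ₂ * sb * p y)) with hΧdef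
  have hΦ : Measurable Φ :=
    (((measurable_pi_apply x).const_mul _).add
      ((measurable_pi_apply y).const_mul _)).exp.ennreal_ofReal
  have hΨ : Measurable Ψ := ((measurable_pi_apply x).const_mul _).exp.ennreal_ofReal
  have hΧ : Measurable Χ := ((measurable_pi_apply y).const_mul _).exp.ennreal_ofReal
  have hpt : ∀ ω, ENNReal.ofReal (Real.exp
        (σ₁ * (α * A x ω + sa * B x ω) + σ₂ * (β * A y ω + sb * C y ω)))
      = Φ (f 0 ω) * Ψ (f 1 ω) * Χ (f 2 ω) := by
    intro ω
    have h0 : f 0 ω = fun t => A t ω := rfl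
    have h1 : f 1 ω = fun t => B t ω := rfl
    have h2 : f 2 ω = fun t => C t ω := rfl
    rw [h0, h1, h2, hΦdef, hΨdef, hΧdef]
    simp only
    rw [← ENNReal.ofReal_mul (Real.exp_nonneg _), ← ENNReal.ofReal_mul (by positivity),
      ← Real.exp_add, ← Real.exp_add]
    congr 2
    ring
  simp_rw [hpt]
  -- split off Χ ∘ f 2
  have hind2 : IndepFun (fun ω => (f 0 ω, f 1 ω)) (f 2) ℙ :=
    hindep.indepFun_prodMk hfmeas 0 1 2 (by decide) (by decide)
  have hindA : IndepFun (fun ω => Φ (f 0 ω) * Ψ (f 1 ω)) (fun ω => Χ (f 2 ω)) ℙ :=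
    hind2.comp ((hΦ.comp measurable_fst).mul (hΨ.comp measurable_snd)) hΧ
  have hind01 : IndepFun (f 0) (f 1) ℙ := hindep.indepFun (by decide)
  have hindB : IndepFun (fun ω => Φ (f 0 ω)) (fun ω => Ψ (f 1 ω)) ℙ := hind01.comp hΦ hΨ
  have step1 : ∫⁻ ω, Φ (f 0 ω) * Ψ (f 1 ω) * Χ (f 2 ω) ∂ℙ
      = (∫⁻ ω, Φ (f 0 ω) * Ψ (f 1 ω) ∂ℙ) * ∫⁻ ω, Χ (f 2 ω) ∂ℙ :=
    lintegral_mul_eq_lintegral_mul_lintegral_of_indepFun''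
      ((hΦ.comp (hfmeas 0)).mul (hΨ.comp (hfmeas 1))).aemeasurable
      (hΧ.comp (hfmeas 2)).aemeasurable hindA
  have step2 : ∫⁻ ω, Φ (f 0 ω) * Ψ (f 1 ω) ∂ℙ
      = (∫⁻ ω, Φ (f 0 ω) ∂ℙ) * ∫⁻ ω, Ψ (f 1 ω) ∂ℙ :=
    lintegral_mul_eq_lintegral_mul_lintegral_of_indepFun''
      (hΦ.comp (hfmeas 0)).aemeasurable (hΨ.comp (hfmeas 1)).aemeasurable hindB
  rw [step1, step2]
  have hB1 : ∫⁻ ω, Ψ (f 1 ω) ∂ℙ = ENNReal.ofReal (Real.exp (σ₁ ^ 2 * (1 - α ^ 2) * x / 2)) := by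
    have := bm_exp_single hB hx (σ₁ * sa)
    rw [show (fun ω => Ψ (f 1 ω)) = fun ω => ENNReal.ofReal (Real.exp (σ₁ * sa * B x ω)) from
      rfl, this, mul_pow, hsa, Real.sq_sqrt (by linarith : (0:ℝ) ≤ 1 - α ^ 2)]
  have hC1 : ∫⁻ ω, Χ (f 2 ω) ∂ℙ = ENNReal.ofReal (Real.exp (σ₂ ^ 2 * (1 - β ^ 2) * y / 2)) := by
    have := bm_exp_single hC hy (σ₂ * sb)
    rw [show (fun ω => Χ (f 2 ω)) = fun ω => ENNReal.ofReal (Real.exp (σ₂ * sb * C y ω)) from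
      rfl, this, mul_pow, hsb, Real.sq_sqrt (by linarith : (0:ℝ) ≤ 1 - β ^ 2)]
  have hA1 : ∫⁻ ω, Φ (f 0 ω) ∂ℙ = ENNReal.ofReal (Real.exp
      (((σ₁ * α) ^ 2 * x + (σ₂ * β) ^ 2 * y + 2 * (σ₁ * α) * (σ₂ * β) * min x y) / 2)) := by
    have heq : (fun ω => Φ (f 0 ω))
        = fun ω => ENNReal.ofReal (Real.exp (σ₁ * α * A x ω + σ₂ * β * A y ω)) := rfl
    rcases le_total x y with hxy | hyx
    · rw [heq, bm_exp_pair hA hx hxy, min_eq_left hxy]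
    · have hcomm : (fun ω => ENNReal.ofReal (Real.exp (σ₁ * α * A x ω + σ₂ * β * A y ω)))
          = fun ω => ENNReal.ofReal (Real.exp (σ₂ * β * A y ω + σ₁ * α * A x ω)) := by
        funext ω; rw [add_comm]
      rw [heq, hcomm, bm_exp_pair hA hy hyx, min_eq_right hyx]
      congr 2
      ring
  rw [hA1, hB1, hC1, ← ENNReal.ofReal_mul (Real.exp_nonneg _),
    ← ENNReal.ofReal_mul (by positivity), ← Real.exp_add, ← Real.exp_add]
  congr 2
  ring

lemma real_integral_exp_Ioi (a : ℝ) {b : ℝ} (hb : 0 < b) :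
    ∫ x in Ioi a, Real.exp (-(b * x)) = Real.exp (-(b * a)) / b := by
  have h := integral_comp_mul_left_Ioi (fun u => Real.exp (-u)) a hb
  simp only [smul_eq_mul] at h
  rw [h, integral_exp_neg_Ioi]
  ring

lemma lint_exp_Ioi (a : ℝ) {b : ℝ} (hb : 0 < b) :
    ∫⁻ x in Ioi a, ENNReal.ofReal (Real.exp (-(b * x))) = ENNReal.ofReal (Real.exp (-(b * a)) / b) := by
  rw [← real_integral_exp_Ioi a hb,
    ← ofReal_integral_eq_lintegral_ofReal (exp_neg_integrableOn_Ioi a hb |>.congr_fun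
      (fun x _ => by simp only [neg_mul]) measurableSet_Ioi)
      (ae_of_all _ fun x => Real.exp_nonneg _)]

lemma lint_exp_Ici (a : ℝ) {b : ℝ} (hb : 0 < b) :
    ∫⁻ x in Ici a, ENNReal.ofReal (Real.exp (-(b * x))) = ENNReal.ofReal (Real.exp (-(b * a)) / b) := by
  rw [← restrict_Ioi_eq_restrict_Ici]
  exact lint_exp_Ioi a hb

section Det
variable {lam₁ lam₂ c : ℝ}

noncomputable def gker (lam₁ lam₂ c : ℝ) : ℝ × ℝ → ℝ≥0∞ :=
  fun p => ENNReal.ofReal (Real.exp (-lam₁ * p.1 - lam₂ * p.2 + c * min p.1 p.2))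

lemma gker_meas : Measurable (gker lam₁ lam₂ c) := by
  apply Measurable.ennreal_ofReal
  apply Continuous.measurable
  continuity

noncomputable def nu (lam₁ lam₂ c : ℝ) : Measure (ℝ × ℝ) :=
  (volume : Measure (ℝ × ℝ)).withDensity (gker lam₁ lam₂ c)

lemma nu_T (h1 : 0 < lam₁) (h2 : 0 < lam₂) (hc : c < lam₁ + lam₂) :
    nu lam₁ lam₂ c (Ioi 0 ×ˢ Ioi 0)
      = ENNReal.ofReal ((lam₁ + lam₂) / (lam₁ * lam₂ * (lam₁ + lam₂ - c))) := by
  have hd : 0 < lam₁ + lam₂ - c := by linarith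
  set s1 : Set (ℝ × ℝ) := {p | 0 < p.1 ∧ p.1 ≤ p.2} with hs1
  set s2 : Set (ℝ × ℝ) := {p | 0 < p.2 ∧ p.2 < p.1} with hs2
  have hs1m : MeasurableSet s1 :=
    (measurable_fst (by exact measurableSet_Ioi)).inter
      (measurableSet_le measurable_fst measurable_snd)
  have hs2m : MeasurableSet s2 :=
    (measurable_snd (by exact measurableSet_Ioi)).inter
      (measurableSet_lt measurable_snd measurable_fst)
  have hsplit : Ioi (0:ℝ) ×ˢ Ioi (0:ℝ) = s1 ∪ s2 := by
    ext p
    simp only [mem_prod, mem_Ioi, mem_union, hs1, hs2, mem_setOf_eq]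
    constructor
    · rintro ⟨hx, hy⟩
      rcases le_or_gt p.1 p.2 with h | h
      · exact Or.inl ⟨hx, h⟩
      · exact Or.inr ⟨hy, h⟩
    · rintro (⟨hx, hy⟩ | ⟨hy, hx⟩)
      · exact ⟨hx, lt_of_lt_of_le hx hy⟩
      · exact ⟨lt_trans hy hx, hy⟩
  have hdisj : Disjoint s1 s2 := by
    rw [Set.disjoint_left]
    rintro p ⟨_, h12⟩ ⟨_, h21⟩
    exact absurd h12 (not_le.mpr h21)
  rw [nu, withDensity_apply _ (by rw [hsplit]; exact hs1m.union hs2m), hsplit,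
    lintegral_union hs2m hdisj]
  have hI1 : ∫⁻ p in s1, gker lam₁ lam₂ c p
      = ENNReal.ofReal (1 / (lam₂ * (lam₁ + lam₂ - c))) := by
    rw [← lintegral_indicator (by exact hs1m)]
    rw [Measure.volume_eq_prod, lintegral_prod _ ((gker_meas.indicator hs1m).aemeasurable)]
    have hinner : ∀ x : ℝ, ∫⁻ y, s1.indicator (gker lam₁ lam₂ c) (x, y)
        = (Ioi (0:ℝ)).indicator
            (fun x' => ENNReal.ofReal (Real.exp (-((lam₁ + lam₂ - c) * x')) / lam₂)) x := by
      intro x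
      by_cases hx : 0 < x
      · have : (fun y => s1.indicator (gker lam₁ lam₂ c) (x, y))
            = fun y => (Ici x).indicator
                (fun y' => ENNReal.ofReal (Real.exp ((c - lam₁) * x)) *
                  ENNReal.ofReal (Real.exp (-(lam₂ * y')))) y := by
          funext y
          by_cases hxy : x ≤ y
          · rw [Set.indicator_of_mem (by exact ⟨hx, hxy⟩ : (x, y) ∈ s1),
              Set.indicator_of_mem (mem_Ici.mpr hxy), gker,
              ← ENNReal.ofReal_mul (Real.exp_nonneg _), ← Real.exp_add]
            congr 2
            rw [min_eq_left hxy]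
            ring
          · rw [Set.indicator_of_notMem (fun h => hxy h.2),
              Set.indicator_of_notMem (fun h => hxy (mem_Ici.mp h))]
        rw [this, lintegral_indicator (by exact measurableSet_Ici),
          lintegral_const_mul _ (f := fun y' => ENNReal.ofReal (Real.exp (-(lam₂ * y')))) ((measurable_const.mul measurable_id').neg.exp.ennreal_ofReal),
          lint_exp_Ici x h2, Set.indicator_of_mem (mem_Ioi.mpr hx),
          ← ENNReal.ofReal_mul (Real.exp_nonneg _)]
        congr 1
        rw [← mul_div_assoc, ← Real.exp_add]
        congr 2
        ring
      · have : (fun y => s1.indicator (gker lam₁ lam₂ c) (x, y)) = fun _ => 0 := by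
          funext y
          exact Set.indicator_of_notMem (fun h => hx h.1) _
        rw [this, lintegral_zero, Set.indicator_of_notMem (by simpa using hx)]
    simp_rw [hinner]
    rw [lintegral_indicator (by exact measurableSet_Ioi)]
    simp_rw [div_eq_mul_inv, ENNReal.ofReal_mul (Real.exp_nonneg _)]
    rw [lintegral_mul_const'' _ (f := fun a => ENNReal.ofReal (Real.exp (-((lam₁ + lam₂ - c) * a)))) ((measurable_const.mul measurable_id').neg.exp.ennreal_ofReal).aemeasurable,
      lint_exp_Ioi 0 hd, mul_zero, neg_zero, Real.exp_zero,
      ← ENNReal.ofReal_mul (by positivity)]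
    congr 1
    rw [one_div]
    field_simp
  have hI2 : ∫⁻ p in s2, gker lam₁ lam₂ c p
      = ENNReal.ofReal (1 / (lam₁ * (lam₁ + lam₂ - c))) := by
    rw [← lintegral_indicator (by exact hs2m)]
    rw [Measure.volume_eq_prod, lintegral_prod_symm _ ((gker_meas.indicator hs2m).aemeasurable)]
    have hinner : ∀ y : ℝ, ∫⁻ x, s2.indicator (gker lam₁ lam₂ c) (x, y)
        = (Ioi (0:ℝ)).indicator
            (fun y' => ENNReal.ofReal (Real.exp (-((lam₁ + lam₂ - c) * y')) / lam₁)) y := by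
      intro y
      by_cases hy : 0 < y
      · have : (fun x => s2.indicator (gker lam₁ lam₂ c) (x, y))
            = fun x => (Ioi y).indicator
                (fun x' => ENNReal.ofReal (Real.exp ((c - lam₂) * y)) *
                  ENNReal.ofReal (Real.exp (-(lam₁ * x')))) x := by
          funext x
          by_cases hxy : y < x
          · rw [Set.indicator_of_mem (by exact ⟨hy, hxy⟩ : (x, y) ∈ s2),
              Set.indicator_of_mem (mem_Ioi.mpr hxy), gker,
              ← ENNReal.ofReal_mul (Real.exp_nonneg _), ← Real.exp_add]
            congr 2
            rw [min_eq_right (le_of_lt hxy)]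
            ring
          · rw [Set.indicator_of_notMem (fun h => hxy h.2),
              Set.indicator_of_notMem (fun h => hxy (mem_Ioi.mp h))]
        rw [this, lintegral_indicator (by exact measurableSet_Ioi),
          lintegral_const_mul _ (f := fun x' => ENNReal.ofReal (Real.exp (-(lam₁ * x')))) ((measurable_const.mul measurable_id').neg.exp.ennreal_ofReal),
          lint_exp_Ioi y h1, Set.indicator_of_mem (mem_Ioi.mpr hy),
          ← ENNReal.ofReal_mul (Real.exp_nonneg _)]
        congr 1
        rw [← mul_div_assoc, ← Real.exp_add]
        congr 2
        ring
      · have : (fun x => s2.indicator (gker lam₁ lam₂ c) (x, y)) = fun _ => 0 := by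
          funext x
          exact Set.indicator_of_notMem (fun h => hy h.1) _
        rw [this, lintegral_zero, Set.indicator_of_notMem (by simpa using hy)]
    simp_rw [hinner]
    rw [lintegral_indicator (by exact measurableSet_Ioi)]
    simp_rw [div_eq_mul_inv, ENNReal.ofReal_mul (Real.exp_nonneg _)]
    rw [lintegral_mul_const'' _ (f := fun a => ENNReal.ofReal (Real.exp (-((lam₁ + lam₂ - c) * a)))) ((measurable_const.mul measurable_id').neg.exp.ennreal_ofReal).aemeasurable,
      lint_exp_Ioi 0 hd, mul_zero, neg_zero, Real.exp_zero,
      ← ENNReal.ofReal_mul (by positivity)]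
    congr 1
    rw [one_div]
    field_simp
  rw [hI1, hI2, ← ENNReal.ofReal_add (by positivity) (by positivity)]
  congr 1
  field_simp

lemma nu_tendsto (h1 : 0 < lam₁) (h2 : 0 < lam₂) (hc : c < lam₁ + lam₂) :
    Tendsto (fun t : ℝ => nu lam₁ lam₂ c (Ioc 0 t ×ˢ Ioc 0 t)) atTop
      (nhds (ENNReal.ofReal ((lam₁ + lam₂) / (lam₁ * lam₂ * (lam₁ + lam₂ - c))))) := by
  have hmono : Monotone fun t : ℝ => Ioc (0:ℝ) t ×ˢ Ioc (0:ℝ) t := by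
    intro s t hst
    exact Set.prod_mono (Ioc_subset_Ioc_right hst) (Ioc_subset_Ioc_right hst)
  have hunion : ⋃ t : ℝ, Ioc (0:ℝ) t ×ˢ Ioc (0:ℝ) t = Ioi 0 ×ˢ Ioi 0 := by
    ext p
    simp only [mem_iUnion, mem_prod, mem_Ioc, mem_Ioi]
    constructor
    · rintro ⟨t, ⟨h1', _⟩, ⟨h2', _⟩⟩
      exact ⟨h1', h2'⟩
    · rintro ⟨hx, hy⟩
      exact ⟨max p.1 p.2, ⟨hx, le_max_left _ _⟩, ⟨hy, le_max_right _ _⟩⟩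
  have := tendsto_measure_iUnion_atTop (μ := nu lam₁ lam₂ c) hmono
  rw [hunion, nu_T h1 h2 hc] at this
  exact this

end Det

end Helpers

set_option maxHeartbeats 2000000 in
open Set in
open scoped NNReal ENNReal in
/-- Bimolecular reaction with two multiplicatively noisy reactants driven by correlated
noises. Let `A, B, C` be independent standard Brownian motions, `α, β ∈ [−1, 1]`,
`U_t = α A_t + √(1−α²) B_t`, `W_t = β A_t + √(1−β²) C_t`, `ρ = αβ`. With `X̄₁, X̄₂ > 0`,
`σᵢ > 0`, `λᵢ > σᵢ²/2`, the product input
`u(t) = (λ₁X̄₁ ∫₀^t e^{−(λ₁+σ₁²/2)x} e^{σ₁U_x} dx)(λ₂X̄₂ ∫₀^t e^{−(λ₂+σ₂²/2)y} e^{σ₂W_y} dy)`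
satisfies `lim_{t→∞} E[u(t)] = X̄₁X̄₂(λ₁+λ₂)/(λ₁+λ₂−ρσ₁σ₂)`; in particular positive
correlation increases the limiting mean above `X̄₁X̄₂` and negative correlation decreases
it. -/
theorem correlated_multiplicative_noise_shifts_mean
    {Ω : Type*} [MeasureSpace Ω] [IsProbabilityMeasure (ℙ : Measure Ω)]
    (A B C : ℝ → Ω → ℝ)
    (hA : IsStdBrownianMotion A) (hB : IsStdBrownianMotion B) (hC : IsStdBrownianMotion C)
    (hindep : iIndepFun
      (fun i : Fin 3 => fun ω => fun t : ℝ => (![A, B, C] i) t ω) ℙ)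
    (α β : ℝ) (hα : α ∈ Set.Icc (-1 : ℝ) 1) (hβ : β ∈ Set.Icc (-1 : ℝ) 1)
    (U W : ℝ → Ω → ℝ)
    (hU : ∀ t ω, U t ω = α * A t ω + Real.sqrt (1 - α ^ 2) * B t ω)
    (hWdef : ∀ t ω, W t ω = β * A t ω + Real.sqrt (1 - β ^ 2) * C t ω)
    (ρ : ℝ) (hρ : ρ = α * β)
    (X₁ X₂ σ₁ σ₂ lam₁ lam₂ : ℝ) (hX₁ : 0 < X₁) (hX₂ : 0 < X₂) (hσ₁ : 0 < σ₁) (hσ₂ : 0 < σ₂)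
    (hlam₁ : σ₁ ^ 2 / 2 < lam₁) (hlam₂ : σ₂ ^ 2 / 2 < lam₂)
    (u : ℝ → Ω → ℝ)
    (hu : ∀ t ω, u t ω =
      (lam₁ * X₁ * ∫ x in (0 : ℝ)..t, Real.exp (-(lam₁ + σ₁ ^ 2 / 2) * x) * Real.exp (σ₁ * U x ω)) *
      (lam₂ * X₂ * ∫ y in (0 : ℝ)..t, Real.exp (-(lam₂ + σ₂ ^ 2 / 2) * y) * Real.exp (σ₂ * W y ω))) :
    Tendsto (fun t : ℝ => ∫ ω, u t ω) atTop
        (nhds (X₁ * X₂ * (lam₁ + lam₂) / (lam₁ + lam₂ - ρ * σ₁ * σ₂))) ∧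
      (0 < ρ → X₁ * X₂ < X₁ * X₂ * (lam₁ + lam₂) / (lam₁ + lam₂ - ρ * σ₁ * σ₂)) ∧
      (ρ < 0 → X₁ * X₂ * (lam₁ + lam₂) / (lam₁ + lam₂ - ρ * σ₁ * σ₂) < X₁ * X₂) := by
  classical
  obtain ⟨hαl, hαr⟩ := hα
  obtain ⟨hβl, hβr⟩ := hβ
  have hα2 : α ^ 2 ≤ 1 := by nlinarith
  have hβ2 : β ^ 2 ≤ 1 := by nlinarith
  have hl1 : 0 < lam₁ := lt_of_le_of_lt (by positivity) hlam₁
  have hl2 : 0 < lam₂ := lt_of_le_of_lt (by positivity) hlam₂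
  set c : ℝ := ρ * σ₁ * σ₂ with hcdef
  have hρ1 : ρ ≤ 1 := by nlinarith [sq_nonneg (α - β), sq_nonneg (α + β)]
  have hcle : c ≤ σ₁ * σ₂ := by nlinarith [mul_pos hσ₁ hσ₂]
  have hc : c < lam₁ + lam₂ := by nlinarith [sq_nonneg (σ₁ - σ₂)]
  have hd : 0 < lam₁ + lam₂ - c := by linarith
  -- the exceptional null set and modified processes
  set sa : ℝ := Real.sqrt (1 - α ^ 2) with hsadef
  set sb : ℝ := Real.sqrt (1 - β ^ 2) with hsbdef
  have haeP : ∀ᵐ ω, (Continuous fun t => A t ω) ∧ (Continuous fun t => B t ω) ∧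
      (Continuous fun t => C t ω) := hA.2.2.2.2.and (hB.2.2.2.2.and hC.2.2.2.2)
  obtain ⟨N, hNsub, hNmeas, hNnull⟩ := exists_measurable_superset_of_null (ae_iff.mp haeP)
  have hgood : ∀ ω, ω ∉ N → (Continuous fun t => A t ω) ∧ (Continuous fun t => B t ω) ∧
      (Continuous fun t => C t ω) := by
    intro ω hω
    by_contra h
    exact hω (hNsub h)
  have hNae : ∀ᵐ ω, ω ∉ N := by
    rw [ae_iff]
    simpa using hNnull
  set A' : ℝ → Ω → ℝ := fun t ω => if ω ∈ N then 0 else A t ω with hA'def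
  set B' : ℝ → Ω → ℝ := fun t ω => if ω ∈ N then 0 else B t ω with hB'def
  set C' : ℝ → Ω → ℝ := fun t ω => if ω ∈ N then 0 else C t ω with hC'def
  set U' : ℝ → Ω → ℝ := fun x ω => α * A' x ω + sa * B' x ω with hU'def
  set W' : ℝ → Ω → ℝ := fun y ω => β * A' y ω + sb * C' y ω with hW'def
  have hU'meas : ∀ x, Measurable (U' x) := fun x =>
    ((Measurable.ite hNmeas measurable_const (hA.1 x)).const_mul α).add
      ((Measurable.ite hNmeas measurable_const (hB.1 x)).const_mul sa)
  have hW'meas : ∀ y, Measurable (W' y) := fun y =>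
    ((Measurable.ite hNmeas measurable_const (hA.1 y)).const_mul β).add
      ((Measurable.ite hNmeas measurable_const (hC.1 y)).const_mul sb)
  have hU'cont : ∀ ω, Continuous fun x => U' x ω := by
    intro ω
    by_cases hω : ω ∈ N
    · simp only [hU'def, hA'def, hB'def, if_pos hω]
      exact continuous_const
    · have h1 : (fun x => U' x ω) = fun x => α * A x ω + sa * B x ω := by
        funext x
        simp only [hU'def, hA'def, hB'def, if_neg hω]
      rw [h1]
      exact (continuous_const.mul (hgood ω hω).1).add
        (continuous_const.mul (hgood ω hω).2.1)
  have hW'cont : ∀ ω, Continuous fun y => W' y ω := by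
    intro ω
    by_cases hω : ω ∈ N
    · simp only [hW'def, hA'def, hC'def, if_pos hω]
      exact continuous_const
    · have h1 : (fun y => W' y ω) = fun y => β * A y ω + sb * C y ω := by
        funext y
        simp only [hW'def, hA'def, hC'def, if_neg hω]
      rw [h1]
      exact (continuous_const.mul (hgood ω hω).1).add
        (continuous_const.mul (hgood ω hω).2.2)
  have hU'unc : Measurable (Function.uncurry U') :=
    measurable_uncurry_of_continuous_of_measurable hU'cont hU'meas
  have hW'unc : Measurable (Function.uncurry W') :=
    measurable_uncurry_of_continuous_of_measurable hW'cont hW'meas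
  -- joint mgf for the modified processes
  have hmgf : ∀ x y : ℝ, 0 ≤ x → 0 ≤ y →
      ∫⁻ ω, ENNReal.ofReal (Real.exp (σ₁ * U' x ω + σ₂ * W' y ω)) ∂ℙ
        = ENNReal.ofReal (Real.exp
            (σ₁ ^ 2 * x / 2 + σ₂ ^ 2 * y / 2 + c * min x y)) := by
    intro x y hx hy
    have hcongr : ∀ᵐ ω, ENNReal.ofReal (Real.exp (σ₁ * U' x ω + σ₂ * W' y ω))
        = ENNReal.ofReal (Real.exp
            (σ₁ * (α * A x ω + sa * B x ω) + σ₂ * (β * A y ω + sb * C y ω))) := by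
      filter_upwards [hNae] with ω hω
      simp only [hU'def, hW'def, hA'def, hB'def, hC'def, if_neg hω]
    rw [lintegral_congr_ae hcongr, hsadef, hsbdef,
      joint_mgf A B C hA hB hC hindep α β σ₁ σ₂ hα2 hβ2 hx hy, hcdef, hρ]
  -- Claim A: the expectation at a fixed time
  set K : ℝ := lam₁ * X₁ * (lam₂ * X₂) with hKdef
  have hKpos : 0 < K := by positivity
  have claimA : ∀ t : ℝ, 0 ≤ t →
      ∫ ω, u t ω = K * (nu lam₁ lam₂ c (Ioc 0 t ×ˢ Ioc 0 t)).toReal := by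
    intro t ht
    set F₁ : ℝ → Ω → ℝ := fun x ω =>
      Real.exp (-(lam₁ + σ₁ ^ 2 / 2) * x) * Real.exp (σ₁ * U' x ω) with hF₁def
    set F₂ : ℝ → Ω → ℝ := fun y ω =>
      Real.exp (-(lam₂ + σ₂ ^ 2 / 2) * y) * Real.exp (σ₂ * W' y ω) with hF₂def
    have hF₁c : ∀ ω, Continuous fun x => F₁ x ω := fun ω =>
      (Real.continuous_exp.comp (continuous_const.mul continuous_id)).mul
        (Real.continuous_exp.comp (continuous_const.mul (hU'cont ω)))
    have hF₂c : ∀ ω, Continuous fun y => F₂ y ω := fun ω =>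
      (Real.continuous_exp.comp (continuous_const.mul continuous_id)).mul
        (Real.continuous_exp.comp (continuous_const.mul (hW'cont ω)))
    have hF₁m : Measurable fun q : ℝ × Ω => F₁ q.1 q.2 :=
      ((measurable_fst.const_mul (-(lam₁ + σ₁ ^ 2 / 2))).exp).mul
        ((hU'unc.const_mul σ₁).exp)
    have hF₂m : Measurable fun q : ℝ × Ω => F₂ q.1 q.2 :=
      ((measurable_fst.const_mul (-(lam₂ + σ₂ ^ 2 / 2))).exp).mul
        ((hW'unc.const_mul σ₂).exp)
    have hF₁nn : ∀ x ω, 0 ≤ F₁ x ω := fun x ω => by positivity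
    have hF₂nn : ∀ y ω, 0 ≤ F₂ y ω := fun y ω => by positivity
    set u' : Ω → ℝ := fun ω => (lam₁ * X₁ * ∫ x in Ioc (0:ℝ) t, F₁ x ω) *
      (lam₂ * X₂ * ∫ y in Ioc (0:ℝ) t, F₂ y ω) with hu'def
    have huae : u t =ᵐ[ℙ] u' := by
      filter_upwards [hNae] with ω hω
      rw [hu t ω, hu'def]
      have e1 : (fun x => Real.exp (-(lam₁ + σ₁ ^ 2 / 2) * x) * Real.exp (σ₁ * U x ω))
          = fun x => F₁ x ω := by
        funext x
        rw [hF₁def, hU x ω]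
        simp only [hU'def, hA'def, hB'def, if_neg hω, hsadef]
      have e2 : (fun y => Real.exp (-(lam₂ + σ₂ ^ 2 / 2) * y) * Real.exp (σ₂ * W y ω))
          = fun y => F₂ y ω := by
        funext y
        rw [hF₂def, hWdef y ω]
        simp only [hW'def, hA'def, hC'def, if_neg hω, hsbdef]
      rw [intervalIntegral.integral_of_le ht, intervalIntegral.integral_of_le ht, e1, e2]
    have hu'sm : AEStronglyMeasurable u' ℙ := by
      have m1 : StronglyMeasurable fun ω => ∫ x in Ioc (0:ℝ) t, F₁ x ω :=
        (hF₁m.comp measurable_swap).stronglyMeasurable.integral_prod_right'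
      have m2 : StronglyMeasurable fun ω => ∫ y in Ioc (0:ℝ) t, F₂ y ω :=
        (hF₂m.comp measurable_swap).stronglyMeasurable.integral_prod_right'
      exact ((m1.const_mul _).mul (m2.const_mul _)).aestronglyMeasurable
    have hu'nn : ∀ ω, 0 ≤ u' ω := by
      intro ω
      apply mul_nonneg <;>
        exact mul_nonneg (by positivity) (integral_nonneg (fun x => by positivity))
    -- the product measure used for the double integral
    set Pν : Measure (ℝ × ℝ) :=
      (volume.restrict (Ioc (0:ℝ) t)).prod (volume.restrict (Ioc (0:ℝ) t)) with hPνdef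
    have hPνr : Pν = (volume : Measure (ℝ × ℝ)).restrict (Ioc (0:ℝ) t ×ˢ Ioc (0:ℝ) t) := by
      rw [hPνdef, Measure.prod_restrict, ← Measure.volume_eq_prod]
    have hlint : ∫⁻ ω, ENNReal.ofReal (u' ω) ∂ℙ
        = ENNReal.ofReal K * nu lam₁ lam₂ c (Ioc 0 t ×ˢ Ioc 0 t) := by
      have hper : ∀ ω, ENNReal.ofReal (u' ω)
          = ENNReal.ofReal K *
            ∫⁻ p, ENNReal.ofReal (F₁ p.1 ω) * ENNReal.ofReal (F₂ p.2 ω) ∂Pν := by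
        intro ω
        have hi₁ : IntegrableOn (fun x => F₁ x ω) (Ioc 0 t) := (hF₁c ω).integrableOn_Ioc
        have hi₂ : IntegrableOn (fun y => F₂ y ω) (Ioc 0 t) := (hF₂c ω).integrableOn_Ioc
        rw [hPνdef, lintegral_prod_mul (f := fun x => ENNReal.ofReal (F₁ x ω))
          (g := fun y => ENNReal.ofReal (F₂ y ω))
          ((hF₁c ω).measurable.ennreal_ofReal).aemeasurable
          ((hF₂c ω).measurable.ennreal_ofReal).aemeasurable]
        rw [hu'def]
        rw [← ofReal_integral_eq_lintegral_ofReal hi₁ (ae_of_all _ fun x => hF₁nn x ω),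
          ← ofReal_integral_eq_lintegral_ofReal hi₂ (ae_of_all _ fun y => hF₂nn y ω)]
        rw [← ENNReal.ofReal_mul (by positivity), ← ENNReal.ofReal_mul (by positivity)]
        congr 1
        have i1 : 0 ≤ ∫ x in Ioc (0:ℝ) t, F₁ x ω := integral_nonneg fun x => hF₁nn x ω
        have i2 : 0 ≤ ∫ y in Ioc (0:ℝ) t, F₂ y ω := integral_nonneg fun y => hF₂nn y ω
        rw [hKdef]
        ring
      simp_rw [hper]
      rw [lintegral_const_mul _ (by
        apply Measurable.lintegral_prod_right'
          (f := fun q : Ω × (ℝ × ℝ) => ENNReal.ofReal (F₁ q.2.1 q.1) * ENNReal.ofReal (F₂ q.2.2 q.1))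
        exact ((hF₁m.comp (measurable_snd.fst.prodMk measurable_fst)).ennreal_ofReal).mul
          ((hF₂m.comp (measurable_snd.snd.prodMk measurable_fst)).ennreal_ofReal))]
      congr 1
      have hswap := lintegral_lintegral_swap (μ := (ℙ : Measure Ω)) (ν := Pν)
        (f := fun ω p => ENNReal.ofReal (F₁ p.1 ω) * ENNReal.ofReal (F₂ p.2 ω))
        (((hF₁m.comp (measurable_snd.fst.prodMk measurable_fst)).ennreal_ofReal).mul
          ((hF₂m.comp (measurable_snd.snd.prodMk measurable_fst)).ennreal_ofReal)).aemeasurable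
      rw [hswap]
      rw [hPνr]
      have hinner : ∀ p : ℝ × ℝ, p ∈ Ioc (0:ℝ) t ×ˢ Ioc (0:ℝ) t →
          ∫⁻ ω, ENNReal.ofReal (F₁ p.1 ω) * ENNReal.ofReal (F₂ p.2 ω) ∂ℙ
            = gker lam₁ lam₂ c p := by
        rintro ⟨x, y⟩ ⟨hx, hy⟩
        have hx0 : (0:ℝ) ≤ x := le_of_lt hx.1
        have hy0 : (0:ℝ) ≤ y := le_of_lt hy.1
        have hpt : ∀ ω, ENNReal.ofReal (F₁ x ω) * ENNReal.ofReal (F₂ y ω)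
            = ENNReal.ofReal (Real.exp (-(lam₁ + σ₁ ^ 2 / 2) * x)
                * Real.exp (-(lam₂ + σ₂ ^ 2 / 2) * y))
              * ENNReal.ofReal (Real.exp (σ₁ * U' x ω + σ₂ * W' y ω)) := by
          intro ω
          rw [← ENNReal.ofReal_mul (by positivity), ← ENNReal.ofReal_mul (by positivity),
            hF₁def, hF₂def, Real.exp_add]
          congr 1
          ring
        simp_rw [hpt]
        rw [lintegral_const_mul _ (f := fun ω => ENNReal.ofReal (Real.exp (σ₁ * U' x ω + σ₂ * W' y ω)))
          (((hU'meas x).const_mul σ₁).add ((hW'meas y).const_mul σ₂)).exp.ennreal_ofReal,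
          hmgf x y hx0 hy0, ← ENNReal.ofReal_mul (by positivity), gker,
          ← Real.exp_add]
        congr 2
        rw [← Real.exp_add]
        congr 1
        ring
      rw [setLIntegral_congr_fun (measurableSet_Ioc.prod measurableSet_Ioc)
        (fun p hp => hinner p hp)]
      rw [nu, withDensity_apply _ (measurableSet_Ioc.prod measurableSet_Ioc)]
    rw [integral_congr_ae huae,
      integral_eq_lintegral_of_nonneg_ae (ae_of_all _ hu'nn) hu'sm, hlint,
      ENNReal.toReal_mul, ENNReal.toReal_ofReal hKpos.le]
  -- the limit
  have hnuT : nu lam₁ lam₂ c (Ioi 0 ×ˢ Ioi 0)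
      = ENNReal.ofReal ((lam₁ + lam₂) / (lam₁ * lam₂ * (lam₁ + lam₂ - c))) := nu_T hl1 hl2 hc
  have hlim0 : Tendsto (fun t : ℝ => (nu lam₁ lam₂ c (Ioc 0 t ×ˢ Ioc 0 t)).toReal) atTop
      (nhds ((lam₁ + lam₂) / (lam₁ * lam₂ * (lam₁ + lam₂ - c)))) := by
    have h1 := nu_tendsto hl1 hl2 hc
    have h2 := (ENNReal.tendsto_toReal (a := ENNReal.ofReal
        ((lam₁ + lam₂) / (lam₁ * lam₂ * (lam₁ + lam₂ - c)))) ENNReal.ofReal_ne_top).comp h1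
    rwa [ENNReal.toReal_ofReal (by positivity)] at h2
  have hval : K * ((lam₁ + lam₂) / (lam₁ * lam₂ * (lam₁ + lam₂ - c)))
      = X₁ * X₂ * (lam₁ + lam₂) / (lam₁ + lam₂ - ρ * σ₁ * σ₂) := by
    rw [hKdef, ← hcdef]
    field_simp
  refine ⟨?_, ?_, ?_⟩
  · have hlim1 : Tendsto (fun t : ℝ => K * (nu lam₁ lam₂ c (Ioc 0 t ×ˢ Ioc 0 t)).toReal) atTop
        (nhds (X₁ * X₂ * (lam₁ + lam₂) / (lam₁ + lam₂ - ρ * σ₁ * σ₂))) := by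
      rw [← hval]
      exact hlim0.const_mul K
    apply hlim1.congr'
    filter_upwards [eventually_ge_atTop (0:ℝ)] with t ht
    exact (claimA t ht).symm
  · intro hρpos
    rw [lt_div_iff₀ hd]
    have hcpos : 0 < c := by rw [hcdef]; positivity
    nlinarith [mul_pos hX₁ hX₂]
  · intro hρneg
    rw [div_lt_iff₀ hd]
    have hcneg : c < 0 := by
      rw [hcdef]
      have := mul_pos hσ₁ hσ₂
      nlinarith
    nlinarith [mul_pos hX₁ hX₂]
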